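/- Let G be a cubic graph, let C be a circuit of G, and let G_C be the multigraph obtained from G by contracting all edges of C to a single vertex. Then any join J' of G_C can be extended to a join J of G whose restriction to the edges of G not in C corresponds to J'; moreover, there are exactly two such extensions, which differ by the symmetric difference with E(C). -/

import Mathlib

open Finset
open scoped Classical

/-- The number of edges of `S` incident with `v`. -/
noncomputable def edgeDeg {V : Type*} (S : Set (Sym2 V)) (v : V) : ℕ :=
  {e ∈ S | v ∈ e}.ncard

/-- `J` is a join of `G`: a set of edges such that each vertex has degree in `J` of the same
parity as its degree in `G`. -/
def IsJoinOf {V : Type*} (G : SimpleGraph V) (J : Set (Sym2 V)) : Prop :=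
  J ⊆ G.edgeSet ∧ ∀ v : V, edgeDeg J v % 2 = edgeDeg G.edgeSet v % 2

namespace JoinAux

variable {V : Type*} [Fintype V] [DecidableEq V]

lemma zmod2_add_cancel {a b : ZMod 2} (h : a + b = 0) : a = b := by
  revert a b h; decide

lemma zmod2_cases (a : ZMod 2) : a = 0 ∨ a = 1 := by
  revert a; decide

lemma zmod2_two_nsmul : ∀ a : ZMod 2, (2 : ℕ) • a = 0 := by decide

lemma zmod2_arith1 : ∀ a : ZMod 2, a + (1 + a) = 1 := by decide

lemma zmod2_arith2 : ∀ b c : ZMod 2, b + c = 1 → c = 1 + b := by decide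

lemma mod2_iff (a b : ℕ) : a % 2 = b % 2 ↔ (a : ZMod 2) = (b : ZMod 2) := by
  rw [ZMod.natCast_eq_natCast_iff]; exact Iff.rfl

lemma edgeDeg_eq_card (S : Set (Sym2 V)) (v : V) :
    edgeDeg S v = (univ.filter (fun e => e ∈ S ∧ v ∈ e)).card := by
  rw [edgeDeg, ← Set.ncard_coe_finset]
  congr 1; ext e; simp

lemma edgeDeg_cast (S : Set (Sym2 V)) (v : V) :
    (edgeDeg S v : ZMod 2)
      = ∑ e ∈ univ.filter (fun e => e ∈ S), (if v ∈ e then (1:ZMod 2) else 0) := by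
  rw [edgeDeg_eq_card, Finset.card_filter]
  push_cast
  rw [Finset.sum_filter]
  congr 1; ext e
  by_cases h1 : e ∈ S <;> by_cases h2 : v ∈ e <;> simp [h1, h2]

lemma card_mem_sym2 (e : Sym2 V) (he : ¬ e.IsDiag) :
    (univ.filter (fun v => v ∈ e)).card = 2 := by
  induction e with
  | _ a b =>
    have hab : a ≠ b := by simpa using he
    have : univ.filter (fun v => v ∈ s(a,b)) = {a, b} := by
      ext v; simp [Sym2.mem_iff]
    rw [this, card_insert_of_notMem (by simpa using hab), card_singleton]

lemma sum_edgeDeg (S : Set (Sym2 V)) (hS : ∀ e ∈ S, ¬ e.IsDiag) :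
    ∑ v, (edgeDeg S v : ZMod 2) = 0 := by
  simp_rw [edgeDeg_cast]
  rw [Finset.sum_comm]
  refine Finset.sum_eq_zero fun e he => ?_
  rw [Finset.mem_filter] at he
  have : ∑ v, (if v ∈ e then (1:ZMod 2) else 0)
      = ((univ.filter (fun v => v ∈ e)).card : ZMod 2) := by
    rw [Finset.card_filter]; push_cast; rfl
  rw [this, card_mem_sym2 e (hS e he.2)]
  decide

lemma edgeDeg_edgeSet (G : SimpleGraph V) [DecidableRel G.Adj] (v : V) :
    edgeDeg G.edgeSet v = G.degree v := by
  have h : {e ∈ G.edgeSet | v ∈ e} = G.incidenceSet v := rfl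
  rw [edgeDeg, h, Set.ncard_eq_toFinset_card', Set.toFinset_card,
    SimpleGraph.card_incidenceSet_eq_degree]

lemma edgeDeg_union (S₁ S₂ : Set (Sym2 V)) (h : Disjoint S₁ S₂) (v : V) :
    edgeDeg (S₁ ∪ S₂) v = edgeDeg S₁ v + edgeDeg S₂ v := by
  rw [edgeDeg_eq_card, edgeDeg_eq_card, edgeDeg_eq_card, ← Finset.card_union_of_disjoint]
  · congr 1; ext e; by_cases h1 : e ∈ S₁ <;> by_cases h2 : e ∈ S₂ <;> simp [h1, h2]
  · rw [Finset.disjoint_filter]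
    intro e _ he1 he2
    exact (h.ne_of_mem he1.1 he2.1 rfl).elim

lemma edgeDeg_zero_of (S : Set (Sym2 V)) (v : V) (h : ∀ e ∈ S, v ∉ e) :
    edgeDeg S v = 0 := by
  rw [edgeDeg_eq_card, Finset.card_eq_zero, Finset.filter_eq_empty_iff]
  intro e _
  rintro ⟨h1, h2⟩
  exact h e h1 h2

variable {G : SimpleGraph V} (C : G.Subgraph)

lemma vert_of_mem_edge {e : Sym2 V} (he : e ∈ C.edgeSet) {v : V} (hv : v ∈ e) :
    v ∈ C.verts := by
  induction e with
  | _ a b =>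
    rw [SimpleGraph.Subgraph.mem_edgeSet] at he
    rcases Sym2.mem_iff.mp hv with rfl | rfl
    · exact C.edge_vert he
    · exact C.edge_vert he.symm

lemma incident_pair (hCreg : ∀ v ∈ C.verts, (C.neighborSet v).ncard = 2)
    {v : V} (hv : v ∈ C.verts) :
    ∃ e₁ e₂ : ↥C.edgeSet, e₁ ≠ e₂ ∧ v ∈ (e₁ : Sym2 V) ∧ v ∈ (e₂ : Sym2 V) ∧
      (univ.filter (fun e : ↥C.edgeSet => v ∈ (e : Sym2 V))) = {e₁, e₂} := by
  obtain ⟨a, b, hab, hset⟩ := Set.ncard_eq_two.mp (hCreg v hv)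
  have hmem : ∀ w, C.Adj v w ↔ w = a ∨ w = b := by
    intro w
    have : w ∈ C.neighborSet v ↔ w ∈ ({a, b} : Set V) := by rw [hset]
    simpa [SimpleGraph.Subgraph.mem_neighborSet] using this
  have ha : C.Adj v a := (hmem a).mpr (Or.inl rfl)
  have hb : C.Adj v b := (hmem b).mpr (Or.inr rfl)
  refine ⟨⟨s(v,a), SimpleGraph.Subgraph.mem_edgeSet.mpr ha⟩,
          ⟨s(v,b), SimpleGraph.Subgraph.mem_edgeSet.mpr hb⟩, ?_, ?_, ?_, ?_⟩
  · intro h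
    exact hab (Sym2.congr_right.mp (Subtype.ext_iff.mp h))
  · exact Sym2.mem_mk_left v a
  · exact Sym2.mem_mk_left v b
  · ext e
    simp only [Finset.mem_filter, Finset.mem_univ, true_and, Finset.mem_insert,
      Finset.mem_singleton]
    constructor
    · intro hve
      obtain ⟨w, hw⟩ : ∃ w, (e : Sym2 V) = s(v, w) :=
        ⟨Sym2.Mem.other hve, (Sym2.other_spec hve).symm⟩
      have hadj : C.Adj v w := SimpleGraph.Subgraph.mem_edgeSet.mp (hw ▸ e.2)
      rcases (hmem w).mp hadj with rfl | rfl
      · left; exact Subtype.ext hw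
      · right; exact Subtype.ext hw
    · rintro (rfl | rfl)
      · exact Sym2.mem_mk_left v a
      · exact Sym2.mem_mk_left v b

end JoinAux

open JoinAux

theorem join_extension_of_contraction {V : Type*} [Fintype V] [DecidableEq V]
    (G : SimpleGraph V) [DecidableRel G.Adj]
    (hcubic : ∀ v : V, G.degree v = 3)
    (C : G.Subgraph) (hCconn : C.Connected)
    (hCreg : ∀ v ∈ C.verts, (C.neighborSet v).ncard = 2)
    (J' : Set (Sym2 V)) (hJ'sub : J' ⊆ G.edgeSet \ C.edgeSet)
    (hJ'out : ∀ v ∉ C.verts, edgeDeg J' v % 2 = edgeDeg G.edgeSet v % 2)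
    (hJ'contr : {e ∈ J' | ∃ v ∈ C.verts, v ∈ e}.ncard % 2
        = {e ∈ G.edgeSet \ C.edgeSet | ∃ v ∈ C.verts, v ∈ e}.ncard % 2) :
    ∃ J₁ J₂ : Set (Sym2 V), J₁ ≠ J₂ ∧ J₂ = symmDiff J₁ C.edgeSet ∧
      (∀ J ∈ ({J₁, J₂} : Set (Set (Sym2 V))), IsJoinOf G J ∧ J \ C.edgeSet = J') ∧
      (∀ J : Set (Sym2 V), IsJoinOf G J → J \ C.edgeSet = J' → J = J₁ ∨ J = J₂) := by
  classical
  -- basic facts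
  have hJ'G : J' ⊆ G.edgeSet := fun e he => (hJ'sub he).1
  have hJ'E : ∀ e ∈ J', e ∉ C.edgeSet := fun e he => (hJ'sub he).2
  obtain ⟨v₀, hv₀⟩ := hCconn.nonempty
  obtain ⟨e₀, _, _, he₀v, _, _⟩ := incident_pair C hCreg hv₀
  -- the boundary linear map
  let bmap : (↥C.edgeSet → ZMod 2) →ₗ[ZMod 2] (↥C.verts → ZMod 2) :=
    { toFun := fun x v => ∑ e : ↥C.edgeSet, if (v : V) ∈ (e : Sym2 V) then x e else 0
      map_add' := by
        intro x y; funext v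
        simp only [Pi.add_apply]
        rw [← Finset.sum_add_distrib]
        exact Finset.sum_congr rfl fun e _ => by split_ifs <;> simp
      map_smul' := by
        intro c x; funext v
        simp only [Pi.smul_apply, RingHom.id_apply, smul_eq_mul]
        rw [Finset.mul_sum]
        exact Finset.sum_congr rfl fun e _ => by split_ifs <;> simp }
  have hbmap_apply : ∀ (x : ↥C.edgeSet → ZMod 2) (v : ↥C.verts),
      bmap x v = ∑ e : ↥C.edgeSet, if (v : V) ∈ (e : Sym2 V) then x e else 0 := fun _ _ => rfl
  -- sum over incident pair
  have hpair_sum : ∀ (x : ↥C.edgeSet → ZMod 2) {v : V} (hv : v ∈ C.verts),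
      ∃ e₁ e₂ : ↥C.edgeSet, e₁ ≠ e₂ ∧ v ∈ (e₁ : Sym2 V) ∧ v ∈ (e₂ : Sym2 V) ∧
        (∀ e : ↥C.edgeSet, v ∈ (e : Sym2 V) → e = e₁ ∨ e = e₂) ∧
        (∑ e : ↥C.edgeSet, if v ∈ (e : Sym2 V) then x e else 0) = x e₁ + x e₂ := by
    intro x v hv
    obtain ⟨e₁, e₂, hne, h1, h2, hfil⟩ := incident_pair C hCreg hv
    refine ⟨e₁, e₂, hne, h1, h2, ?_, ?_⟩
    · intro e he
      have : e ∈ ({e₁, e₂} : Finset ↥C.edgeSet) := by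
        rw [← hfil]; simp [he]
      simpa using this
    · rw [← Finset.sum_filter, hfil, Finset.sum_pair hne]
  have hone : bmap (fun _ => 1) = 0 := by
    funext v
    obtain ⟨e₁, e₂, hne, _, _, _, hs⟩ := hpair_sum (fun _ => 1) v.2
    rw [hbmap_apply, hs]
    show (1 : ZMod 2) + 1 = 0
    decide
  -- kernel is constants
  have hker : ∀ x : ↥C.edgeSet → ZMod 2, bmap x = 0 → ∀ e f : ↥C.edgeSet, x e = x f := by
    intro x hx0
    have hloc : ∀ (v : V), v ∈ C.verts → ∀ e f : ↥C.edgeSet,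
        v ∈ (e : Sym2 V) → v ∈ (f : Sym2 V) → x e = x f := by
      intro v hv e f he hf
      obtain ⟨e₁, e₂, hne, h1, h2, hclass, hs⟩ := hpair_sum x hv
      have h0 : (∑ e : ↥C.edgeSet, if v ∈ (e : Sym2 V) then x e else 0) = 0 :=
        congrFun hx0 ⟨v, hv⟩
      rw [hs] at h0
      have hval : x e₁ = x e₂ := zmod2_add_cancel h0
      rcases hclass e he with rfl | rfl <;> rcases hclass f hf with rfl | rfl <;>
        first | rfl | exact hval | exact hval.symm
    have hwalk : ∀ (u w : ↥C.verts), C.coe.Walk u w → ∀ e f : ↥C.edgeSet,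
        (u : V) ∈ (e : Sym2 V) → (w : V) ∈ (f : Sym2 V) → x e = x f := by
      intro u w p
      induction p with
      | nil =>
        intro e f he hf
        exact hloc _ (Subtype.prop _) e f he hf
      | @cons a b cc h p ih =>
        intro e f he hf
        have hadjC : C.Adj (a : V) (b : V) := h
        have hg : s((a : V), (b : V)) ∈ C.edgeSet :=
          SimpleGraph.Subgraph.mem_edgeSet.mpr hadjC
        have h1 : x e = x ⟨s((a : V), (b : V)), hg⟩ :=
          hloc _ a.2 e _ he (Sym2.mem_mk_left _ _)
        have h2 : x ⟨s((a : V), (b : V)), hg⟩ = x f :=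
          ih _ f (Sym2.mem_mk_right _ _) hf
        exact h1.trans h2
    intro e f
    obtain ⟨u, hue⟩ : ∃ u, u ∈ (e : Sym2 V) :=
      Sym2.ind (fun a b => ⟨a, Sym2.mem_mk_left a b⟩) (e : Sym2 V)
    obtain ⟨w, hwf⟩ : ∃ w, w ∈ (f : Sym2 V) :=
      Sym2.ind (fun a b => ⟨a, Sym2.mem_mk_left a b⟩) (f : Sym2 V)
    have hu : u ∈ C.verts := vert_of_mem_edge C e.2 hue
    have hw : w ∈ C.verts := vert_of_mem_edge C f.2 hwf
    exact (hCconn ⟨u, hu⟩ ⟨w, hw⟩).elim fun p => hwalk _ _ p e f hue hwf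
  have hker_span : LinearMap.ker bmap
      = Submodule.span (ZMod 2) {(fun _ => 1 : ↥C.edgeSet → ZMod 2)} := by
    apply le_antisymm
    · intro x hx
      rcases zmod2_cases (x e₀) with h0 | h1
      · have : x = 0 := by
          funext f
          rw [hker x (LinearMap.mem_ker.mp hx) f e₀, h0]; rfl
        rw [this]; exact Submodule.zero_mem _
      · have : x = (fun _ => 1) := by
          funext f
          rw [hker x (LinearMap.mem_ker.mp hx) f e₀, h1]
        rw [this]; exact Submodule.mem_span_singleton_self _
    · rw [Submodule.span_le, Set.singleton_subset_iff]
      exact LinearMap.mem_ker.mpr hone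
  -- incident counts
  have h2v : ∀ v : ↥C.verts,
      (univ.filter (fun e : ↥C.edgeSet => (v : V) ∈ (e : Sym2 V))).card = 2 := by
    intro v
    obtain ⟨e₁, e₂, hne, _, _, hfil⟩ := incident_pair C hCreg v.2
    rw [hfil, Finset.card_pair hne]
  have h2e : ∀ e : ↥C.edgeSet,
      (univ.filter (fun v : ↥C.verts => (v : V) ∈ (e : Sym2 V))).card = 2 := by
    intro e
    obtain ⟨a, b, hab⟩ : ∃ a b, (e : Sym2 V) = s(a, b) :=
      Sym2.ind (fun a b => ⟨a, b, rfl⟩) (e : Sym2 V)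
    have hnd : ¬ (e : Sym2 V).IsDiag := G.not_isDiag_of_mem_edgeSet (C.edgeSet_subset e.2)
    have hne : a ≠ b := by rw [hab] at hnd; simpa using hnd
    have ha : a ∈ C.verts := vert_of_mem_edge C e.2 (hab ▸ Sym2.mem_mk_left a b)
    have hb : b ∈ C.verts := vert_of_mem_edge C e.2 (hab ▸ Sym2.mem_mk_right a b)
    have hfil : univ.filter (fun v : ↥C.verts => (v : V) ∈ (e : Sym2 V))
        = {⟨a, ha⟩, ⟨b, hb⟩} := by
      ext v
      simp only [Finset.mem_filter, Finset.mem_univ, true_and, Finset.mem_insert,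
        Finset.mem_singleton, hab, Sym2.mem_iff, Subtype.ext_iff]
    rw [hfil, Finset.card_pair (by simp [Subtype.ext_iff, hne])]
  -- card edges = card verts
  have hcard : Fintype.card ↥C.edgeSet = Fintype.card ↥C.verts := by
    have key : ∑ v : ↥C.verts,
          (univ.filter (fun e : ↥C.edgeSet => (v : V) ∈ (e : Sym2 V))).card
        = ∑ e : ↥C.edgeSet,
          (univ.filter (fun v : ↥C.verts => (v : V) ∈ (e : Sym2 V))).card := by
      simp_rw [Finset.card_filter]
      exact Finset.sum_comm
    simp_rw [fun v => h2v v, fun e => h2e e, Finset.sum_const, card_univ, smul_eq_mul] at key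
    omega
  -- sum functional
  let sumf : (↥C.verts → ZMod 2) →ₗ[ZMod 2] ZMod 2 :=
    { toFun := fun x => ∑ v, x v
      map_add' := by intro x y; simp [Finset.sum_add_distrib]
      map_smul' := by intro c x; simp [Finset.mul_sum] }
  have him_le : LinearMap.range bmap ≤ LinearMap.ker sumf := by
    rintro _ ⟨x, rfl⟩
    rw [LinearMap.mem_ker]
    show (∑ v : ↥C.verts, ∑ e : ↥C.edgeSet,
        if (v : V) ∈ (e : Sym2 V) then x e else 0) = 0
    rw [Finset.sum_comm]
    refine Finset.sum_eq_zero fun e _ => ?_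
    rw [← Finset.sum_filter, Finset.sum_const, h2e e]
    exact zmod2_two_nsmul _
  have hsumf_surj : LinearMap.range sumf = ⊤ := by
    rw [LinearMap.range_eq_top]
    intro c
    refine ⟨fun w => if w = ⟨v₀, hv₀⟩ then c else 0, ?_⟩
    show (∑ v : ↥C.verts, if v = ⟨v₀, hv₀⟩ then c else 0) = c
    simp
  have hrange : LinearMap.range bmap = LinearMap.ker sumf := by
    refine Submodule.eq_of_le_of_finrank_eq him_le ?_
    have h1 := LinearMap.finrank_range_add_finrank_ker bmap
    have h2 := LinearMap.finrank_range_add_finrank_ker sumf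
    rw [Module.finrank_pi] at h1 h2
    have hone_ne : (fun _ => 1 : ↥C.edgeSet → ZMod 2) ≠ 0 := by
      intro h0
      have := congrFun h0 e₀
      simp at this
    rw [hker_span, finrank_span_singleton hone_ne] at h1
    rw [hsumf_surj, finrank_top, Module.finrank_self] at h2
    omega
  -- the target function
  let σ : ↥C.verts → ZMod 2 := fun v => 1 + (edgeDeg J' (v : V) : ZMod 2)
  have hσ : sumf σ = 0 := by
    have hdegcast : ∀ v : V, (edgeDeg G.edgeSet v : ZMod 2) = 1 := by
      intro v
      rw [edgeDeg_edgeSet, hcubic]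
      decide
    have hVcast : ((Fintype.card V : ℕ) : ZMod 2) = 0 := by
      have h0 : ∑ v : V, (edgeDeg G.edgeSet v : ZMod 2) = 0 :=
        sum_edgeDeg _ (fun e he => G.not_isDiag_of_mem_edgeSet he)
      rw [Finset.sum_congr rfl (fun v _ => hdegcast v), Finset.sum_const, card_univ,
        nsmul_eq_mul, mul_one] at h0
      exact h0
    have houtcast : ∀ v ∈ C.verts.toFinsetᶜ, (edgeDeg J' v : ZMod 2) = 1 := by
      intro v hv
      rw [Finset.mem_compl, Set.mem_toFinset] at hv
      rw [(mod2_iff _ _).mp (hJ'out v hv)]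
      exact hdegcast v
    have htot : (∑ v ∈ C.verts.toFinset, (edgeDeg J' v : ZMod 2))
        + ∑ v ∈ C.verts.toFinsetᶜ, (edgeDeg J' v : ZMod 2) = 0 := by
      rw [Finset.sum_add_sum_compl]
      exact sum_edgeDeg _ (fun e he => G.not_isDiag_of_mem_edgeSet (hJ'G he))
    have hcompl : (∑ v ∈ C.verts.toFinsetᶜ, (edgeDeg J' v : ZMod 2))
        = ((C.verts.toFinsetᶜ.card : ℕ) : ZMod 2) := by
      rw [Finset.sum_congr rfl houtcast, Finset.sum_const, nsmul_eq_mul, mul_one]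
    have hWin : (∑ v ∈ C.verts.toFinset, (edgeDeg J' v : ZMod 2))
        = ((C.verts.toFinsetᶜ.card : ℕ) : ZMod 2) := by
      rw [← hcompl]
      exact zmod2_add_cancel (by rw [hcompl] at htot ⊢; exact htot)
    show (∑ v : ↥C.verts, (1 + (edgeDeg J' (v : V) : ZMod 2))) = 0
    rw [Finset.sum_add_distrib, Finset.sum_const, card_univ, nsmul_eq_mul, mul_one]
    have hsubty : (∑ v : ↥C.verts, (edgeDeg J' (v : V) : ZMod 2))
        = ∑ v ∈ C.verts.toFinset, (edgeDeg J' v : ZMod 2) :=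
      (Finset.sum_subtype (p := fun v => v ∈ C.verts) C.verts.toFinset
        (fun x => Set.mem_toFinset) (fun v => (edgeDeg J' v : ZMod 2))).symm
    rw [hsubty, hWin]
    have hcards : C.verts.toFinset.card + C.verts.toFinsetᶜ.card = Fintype.card V :=
      Finset.card_add_card_compl _
    have hcardW : (Fintype.card ↥C.verts : ZMod 2) = (C.verts.toFinset.card : ZMod 2) := by
      rw [Set.toFinset_card]
    rw [hcardW, ← Nat.cast_add, hcards, hVcast]
  obtain ⟨x, hx⟩ : ∃ x, bmap x = σ := by
    have : σ ∈ LinearMap.range bmap := by rw [hrange]; exact LinearMap.mem_ker.mpr hσ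
    exact this
  -- edge sets from indicator functions
  let Tset : (↥C.edgeSet → ZMod 2) → Set (Sym2 V) :=
    fun y => {e | ∃ h : e ∈ C.edgeSet, y ⟨e, h⟩ = 1}
  have hTsub : ∀ y, Tset y ⊆ C.edgeSet := fun y e he => he.1
  have hTdeg : ∀ (y : ↥C.edgeSet → ZMod 2) (v : V),
      (edgeDeg (Tset y) v : ZMod 2)
        = ∑ e : ↥C.edgeSet, if v ∈ (e : Sym2 V) then y e else 0 := by
    intro y v
    rw [edgeDeg_cast, Finset.sum_filter]
    refine Eq.trans (Finset.sum_subset (Finset.subset_univ C.edgeSet.toFinset) ?_).symm ?_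
    · intro e _ he
      rw [Set.mem_toFinset] at he
      exact if_neg (fun hT => he (hTsub y hT))
    refine Eq.trans (Finset.sum_set_coe (s := C.edgeSet)
      (f := fun e => @ite _ (e ∈ Tset y) (Classical.propDecidable _)
        (if v ∈ e then (1:ZMod 2) else 0) 0)).symm ?_
    refine Finset.sum_congr rfl fun e _ => ?_
    rcases zmod2_cases (y e) with h0 | h1
    · have hnT : (e : Sym2 V) ∉ Tset y := by
        rintro ⟨h, hy1⟩
        rw [show (⟨(e : Sym2 V), h⟩ : ↥C.edgeSet) = e from Subtype.ext rfl, h0] at hy1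
        exact absurd hy1 (by decide)
      rw [if_neg hnT, h0]
      split_ifs <;> rfl
    · have hT : (e : Sym2 V) ∈ Tset y :=
        ⟨e.2, by rw [show (⟨(e : Sym2 V), e.2⟩ : ↥C.edgeSet) = e from Subtype.ext rfl]; exact h1⟩
      rw [if_pos hT, h1]
  have hTout : ∀ (y : ↥C.edgeSet → ZMod 2) (v : V), v ∉ C.verts → edgeDeg (Tset y) v = 0 := by
    intro y v hv
    exact edgeDeg_zero_of _ _ fun e he hve => hv (vert_of_mem_edge C (hTsub y he) hve)
  have hTcompl : Tset (x + (fun _ => 1)) = C.edgeSet \ Tset x := by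
    ext e
    constructor
    · rintro ⟨h, hy⟩
      refine ⟨h, ?_⟩
      rintro ⟨h', hx'⟩
      rw [show (⟨e, h'⟩ : ↥C.edgeSet) = ⟨e, h⟩ from Subtype.ext rfl] at hx'
      have h11 : x ⟨e, h⟩ + 1 = 1 := hy
      rw [hx'] at h11
      exact absurd h11 (by decide)
    · rintro ⟨he, hne⟩
      refine ⟨he, ?_⟩
      have hx0 : x ⟨e, he⟩ = 0 := by
        rcases zmod2_cases (x ⟨e, he⟩) with h | h
        · exact h
        · exact absurd ⟨he, h⟩ hne
      show x ⟨e, he⟩ + 1 = 1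
      rw [hx0, zero_add]
  have hx1 : bmap (x + (fun _ => 1)) = σ := by
    rw [map_add, hx, hone, add_zero]
  -- the two joins
  have hdisjT : ∀ y, Disjoint J' (Tset y) :=
    fun y => Set.disjoint_left.mpr fun e heJ heT => hJ'E e heJ (hTsub y heT)
  have hjoin : ∀ y : ↥C.edgeSet → ZMod 2, bmap y = σ →
      IsJoinOf G (J' ∪ Tset y) ∧ (J' ∪ Tset y) \ C.edgeSet = J' := by
    intro y hy
    constructor
    · refine ⟨Set.union_subset hJ'G ((hTsub y).trans C.edgeSet_subset), fun v => ?_⟩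
      rw [mod2_iff, edgeDeg_union _ _ (hdisjT y) v, Nat.cast_add]
      by_cases hv : v ∈ C.verts
      · have h1 : (edgeDeg (Tset y) v : ZMod 2) = σ ⟨v, hv⟩ := by
          rw [hTdeg]
          exact congrFun hy ⟨v, hv⟩
        have h3 : (edgeDeg G.edgeSet v : ZMod 2) = 1 := by
          rw [edgeDeg_edgeSet, hcubic]; decide
        rw [h1, h3]
        exact zmod2_arith1 _
      · rw [hTout y v hv, Nat.cast_zero, add_zero]
        exact (mod2_iff _ _).mp (hJ'out v hv)
    · ext e
      simp only [Set.mem_diff, Set.mem_union]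
      constructor
      · rintro ⟨(h | h), hne⟩
        · exact h
        · exact absurd (hTsub y h) hne
      · intro h
        exact ⟨Or.inl h, hJ'E e h⟩
  have hcoe : ∀ (e : ↥C.edgeSet) (h : (e : Sym2 V) ∈ C.edgeSet),
      (⟨(e : Sym2 V), h⟩ : ↥C.edgeSet) = e := fun e h => Subtype.ext rfl
  refine ⟨J' ∪ Tset x, J' ∪ Tset (x + (fun _ => 1)), ?_, ?_, ?_, ?_⟩
  · intro heq
    rcases zmod2_cases (x e₀) with h0 | h1
    · have hmem : (e₀ : Sym2 V) ∈ J' ∪ Tset (x + (fun _ => 1)) := by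
        right
        refine ⟨e₀.2, ?_⟩
        rw [hcoe e₀ e₀.2]
        show x e₀ + 1 = 1
        rw [h0, zero_add]
      rw [← heq] at hmem
      rcases hmem with h | h
      · exact hJ'E _ h e₀.2
      · obtain ⟨hh, hx1'⟩ := h
        rw [hcoe e₀ hh, h0] at hx1'
        exact absurd hx1' (by decide)
    · have hmem : (e₀ : Sym2 V) ∈ J' ∪ Tset x := by
        right
        refine ⟨e₀.2, ?_⟩
        rw [hcoe e₀ e₀.2]
        exact h1
      rw [heq] at hmem
      rcases hmem with h | h
      · exact hJ'E _ h e₀.2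
      · obtain ⟨hh, hx1'⟩ := h
        rw [hcoe e₀ hh] at hx1'
        have h11 : x e₀ + 1 = 1 := hx1'
        rw [h1] at h11
        exact absurd h11 (by decide)
  · rw [hTcompl]
    ext e
    simp only [Set.mem_union, Set.mem_symmDiff, Set.mem_diff]
    have h1 : e ∈ J' → e ∉ C.edgeSet := hJ'E e
    have h2 : e ∈ Tset x → e ∈ C.edgeSet := fun h => hTsub x h
    tauto
  · rintro J (rfl | rfl)
    · exact hjoin x hx
    · exact hjoin _ hx1
  · intro J hJ hJE
    let y : ↥C.edgeSet → ZMod 2 := fun e => if (e : Sym2 V) ∈ J then 1 else 0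
    have hyval : ∀ (e : Sym2 V) (h : e ∈ C.edgeSet), e ∈ J → y ⟨e, h⟩ = 1 :=
      fun e h hJe => if_pos hJe
    have hyval0 : ∀ (e : Sym2 V) (h : e ∈ C.edgeSet), e ∉ J → y ⟨e, h⟩ = 0 :=
      fun e h hJe => if_neg hJe
    have hTy : Tset y = J ∩ C.edgeSet := by
      ext e
      constructor
      · rintro ⟨h, hy1⟩
        by_cases hJe : e ∈ J
        · exact ⟨hJe, h⟩
        · rw [hyval0 e h hJe] at hy1
          exact absurd hy1 (by decide)
      · rintro ⟨hJe, he⟩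
        exact ⟨he, hyval e he hJe⟩
    have hJdecomp : J = J' ∪ Tset y := by
      rw [hTy, ← hJE]
      exact (Set.diff_union_inter J C.edgeSet).symm
    have hby : bmap y = σ := by
      funext w
      obtain ⟨v, hv⟩ := w
      have hdT : (edgeDeg (Tset y) v : ZMod 2) = bmap y ⟨v, hv⟩ := hTdeg y v
      have hdecomp : edgeDeg J v = edgeDeg J' v + edgeDeg (Tset y) v := by
        conv_lhs => rw [hJdecomp]
        exact edgeDeg_union _ _ (hdisjT y) v
      have hJv : (edgeDeg J v : ZMod 2) = 1 := by
        rw [(mod2_iff _ _).mp (hJ.2 v), edgeDeg_edgeSet, hcubic]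
        decide
      have hsum1 : (edgeDeg J' v : ZMod 2) + (edgeDeg (Tset y) v : ZMod 2) = 1 := by
        rw [← Nat.cast_add, ← hdecomp]
        exact hJv
      have hfin : (edgeDeg (Tset y) v : ZMod 2) = 1 + (edgeDeg J' v : ZMod 2) :=
        zmod2_arith2 _ _ hsum1
      show bmap y ⟨v, hv⟩ = σ ⟨v, hv⟩
      rw [← hdT, hfin]
    have hyx : y - x ∈ LinearMap.ker bmap := by
      rw [LinearMap.mem_ker, map_sub, hby, hx, sub_self]
    rw [hker_span, Submodule.mem_span_singleton] at hyx
    obtain ⟨c, hc⟩ := hyx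
    rcases zmod2_cases c with rfl | rfl
    · left
      have h0 : y = x := by
        rw [zero_smul] at hc
        exact sub_eq_zero.mp hc.symm
      rw [hJdecomp, h0]
    · right
      have h1 : y = x + (fun _ => 1) := by
        have h2 : y - x = (fun _ => 1 : ↥C.edgeSet → ZMod 2) := by rw [← hc, one_smul]
        funext e
        have h3 : y e - x e = 1 := by simpa using congrFun h2 e
        show y e = x e + 1
        exact (eq_add_of_sub_eq h3).trans (add_comm 1 (x e))
      rw [hJdecomp, h1]
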